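/- For all z, w in the closed unit disc of ℂ with z ≠ 0 and w ≠ 0, the quantity |1 − z·conj(w)| is comparable (with universal constants) to max{1 − |z|, 1 − |w|, |z/|z| − w/|w||}. That is, there exist constants c, C > 0 independent of z, w such that c·M ≤ |1 − z·conj(w)| ≤ C·M where M = max{1 − |z|, 1 − |w|, |z/|z| − w/|w||}. -/

import Mathlib

set_option maxHeartbeats 1000000

theorem stmt_6 :
    ∃ c C : ℝ, 0 < c ∧ 0 < C ∧ ∀ z w : ℂ,
      ‖z‖ ≤ 1 → ‖w‖ ≤ 1 → z ≠ 0 → w ≠ 0 →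
      c * max (max (1 - ‖z‖) (1 - ‖w‖))
            (‖z / (‖z‖ : ℂ) - w / (‖w‖ : ℂ)‖)
          ≤ ‖1 - z * (starRingEnd ℂ) w‖ ∧
      ‖1 - z * (starRingEnd ℂ) w‖
          ≤ C * max (max (1 - ‖z‖) (1 - ‖w‖))
            (‖z / (‖z‖ : ℂ) - w / (‖w‖ : ℂ)‖) := by
  refine ⟨3/8, 3, by norm_num, by norm_num, fun z w hz hw hz0 hw0 => ?_⟩
  set r := ‖z‖ with hrdef
  set s := ‖w‖ with hsdef
  have hr : 0 < r := norm_pos_iff.mpr hz0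
  have hs : 0 < s := norm_pos_iff.mpr hw0
  set B := ‖z / (r:ℂ) - w / (s:ℂ)‖ with hBdef
  set T := ‖1 - z * (starRingEnd ℂ) w‖ with hTdef
  have hT0 : 0 ≤ T := norm_nonneg _
  have hB0 : 0 ≤ B := norm_nonneg _
  have hr2 : z.re^2 + z.im^2 = r^2 := by
    rw [hrdef, Complex.sq_norm, Complex.normSq_apply]; ring
  have hs2 : w.re^2 + w.im^2 = s^2 := by
    rw [hsdef, Complex.sq_norm, Complex.normSq_apply]; ring
  -- key identity
  have key : T^2 = (1 - r*s)^2 + r*s*B^2 := by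
    rw [hTdef, hBdef, Complex.sq_norm, Complex.sq_norm, Complex.normSq_apply,
      Complex.normSq_apply]
    simp only [Complex.sub_re, Complex.sub_im, Complex.mul_re, Complex.mul_im,
      Complex.one_re, Complex.one_im, Complex.conj_re, Complex.conj_im,
      Complex.div_ofReal_re, Complex.div_ofReal_im]
    field_simp
    linear_combination (r^2*s^2*(w.re^2+w.im^2) - r*s^3 + (w.re^2+w.im^2)*(r*s-r^2*s^2) + r*s^3 - s^2) * hr2 + (r^3*s*(r*s-1) + 2*r^3*s - r^4*s^2 - r^2) * hs2
  have hB2 : B ≤ 2 := by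
    have h1 : ‖z / (r:ℂ)‖ = 1 := by
      rw [norm_div, Complex.norm_real, Real.norm_eq_abs, abs_of_pos hr, div_self hr.ne']
    have h2 : ‖w / (s:ℂ)‖ = 1 := by
      rw [norm_div, Complex.norm_real, Real.norm_eq_abs, abs_of_pos hs, div_self hs.ne']
    have h3 := norm_add_le (z/(r:ℂ)) (-(w/(s:ℂ)))
    rw [← sub_eq_add_neg, norm_neg, h1, h2] at h3
    rw [hBdef]; linarith
  clear_value B T r s
  clear hBdef hTdef hr2 hs2 hrdef hsdef
  have hrs1 : r * s ≤ 1 := by nlinarith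
  have hTge : 1 - r*s ≤ T := by nlinarith [sq_nonneg B, mul_pos hr hs]
  set M := max (max (1-r) (1-s)) B with hMdef
  clear_value M
  have hM0 : 0 ≤ M := by rw [hMdef]; exact le_trans hB0 (le_max_right _ _)
  have hMa : 1 - r ≤ M := by rw [hMdef]; exact le_trans (le_max_left _ _) (le_max_left _ _)
  have hMb : 1 - s ≤ M := by rw [hMdef]; exact le_trans (le_max_right _ _) (le_max_left _ _)
  have hMc : B ≤ M := by rw [hMdef]; exact le_max_right _ _
  constructor
  · -- lower bound
    by_cases hcase : (1:ℝ)/4 ≤ r * s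
    · have hTB : B/2 ≤ T := by nlinarith [sq_nonneg (1-r*s)]
      have : M ≤ 2 * T := by
        rcases max_cases (max (1-r) (1-s)) B with ⟨h1, _⟩ | ⟨h1, _⟩
        · rw [hMdef, h1]
          rcases max_cases (1-r) (1-s) with ⟨h2, _⟩ | ⟨h2, _⟩ <;> rw [h2] <;> nlinarith
        · rw [hMdef, h1]; nlinarith
      linarith
    · push_neg at hcase
      have h34 : (3:ℝ)/4 ≤ T := by linarith
      have : M ≤ (8/3) * T := by
        rcases max_cases (max (1-r) (1-s)) B with ⟨h1, _⟩ | ⟨h1, _⟩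
        · rw [hMdef, h1]
          rcases max_cases (1-r) (1-s) with ⟨h2, _⟩ | ⟨h2, _⟩ <;> rw [h2] <;> nlinarith
        · rw [hMdef, h1]; nlinarith
      linarith
  · have hT2 : T^2 ≤ (3*M)^2 := by
      have h1 : 1 - r*s ≤ 2*M := by nlinarith
      have h2 : r*s*B^2 ≤ M^2 := by nlinarith [sq_nonneg B, mul_pos hr hs]
      nlinarith [mul_pos hr hs]
    nlinarith [hT0, hM0]
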